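/- arXiv:1009.2389 — 2 statements merged into one kernel-verified Lean document; each statement's English description precedes it below -/
import Mathlib

section
/- Fix k ∈ ℕ and n ≥ 1. For every π ∈ NC^{(k)}(n), one has Kr(Red(π)) = Red(Kr(π)) as partitions of [n̄], where Kr(Red(π)) denotes the Kreweras complement of the non-crossing partition Red(π) ∈ NC(n). -/
open scoped BigOperators
attribute [local instance] Classical.propDecidable

/-- A (set) partition of a type `X`: nonempty blocks, every point in a unique block. -/
def IsPartition {X : Type*} (P : Finset (Finset X)) : Prop :=
  (∀ B ∈ P, B.Nonempty) ∧ ∀ x : X, ∃! B, B ∈ P ∧ x ∈ B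

/-- Non-crossing collection of blocks in a linear order. -/
def IsNonCrossing {X : Type*} [LinearOrder X] (P : Finset (Finset X)) : Prop :=
  ∀ a b c d : X, a < b → b < c → c < d →
    (∃ B ∈ P, a ∈ B ∧ c ∈ B) → (∃ B ∈ P, b ∈ B ∧ d ∈ B) →
    ∃ B ∈ P, a ∈ B ∧ b ∈ B

/-- The finset `NC(n)` of non-crossing partitions of `[n]` (modelled on `Fin n`). -/
noncomputable def ncFinset (n : ℕ) : Finset (Finset (Finset (Fin n))) :=
  Finset.univ.filter fun P => IsPartition P ∧ IsNonCrossing P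

/-- The subtuple `(a_1,…,a_n)|V` of the entries indexed by `V`, in increasing order. -/
noncomputable def restrictTuple {A : Type*} {n : ℕ} (a : Fin n → A) (V : Finset (Fin n)) :
    Fin V.card → A :=
  fun i => a (V.orderIsoOfFin rfl i).1
/-- The interleaved set `[m] ∪ [m̄]` with order `1 < 1̄ < 2 < 2̄ < ⋯ < m < m̄`
(unbarred = `false`, barred = `true`). -/
abbrev Interl (m : ℕ) := Lex (Fin m × Bool)

/-- The copy of a block of `[m]` inside the unbarred part of `[m] ∪ [m̄]`. -/
def unbar {m : ℕ} (B : Finset (Fin m)) : Finset (Interl m) :=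
  B.image fun i => toLex (i, false)

/-- The copy of a block of `[m]` inside the barred part of `[m] ∪ [m̄]`. -/
def barred {m : ℕ} (B : Finset (Fin m)) : Finset (Interl m) :=
  B.image fun i => toLex (i, true)

/-- The union `p ∪ q` of a partition `p` of `[m]` and a partition `q` of the barred copy
`[m̄]` (blocks of `q` being recorded by their unbarred labels), as a collection of blocks
of the interleaved set `[m] ∪ [m̄]`. -/
noncomputable def unionPart {m : ℕ} (p q : Finset (Finset (Fin m))) :
    Finset (Finset (Interl m)) :=
  p.image unbar ∪ q.image barred

/-- `P` refines `Q` (reverse refinement order: `P ≼ Q`). -/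
def Refines {X : Type*} (P Q : Finset (Finset X)) : Prop :=
  ∀ B ∈ P, ∃ C ∈ Q, B ⊆ C

/-- `q` is the Kreweras complement of `p`: `q` is a partition of `[m̄]` (identified with
a partition of `[m]` by relabeling) such that `p ∪ q` is non-crossing on the interleaved
set, and `q` is the greatest such partition for the reverse refinement order. -/
def IsKr {m : ℕ} (p q : Finset (Finset (Fin m))) : Prop :=
  IsPartition q ∧ IsNonCrossing (unionPart p q) ∧
    ∀ q' : Finset (Finset (Fin m)), IsPartition q' → IsNonCrossing (unionPart p q') →
      Refines q' q

/-- The Kreweras complement `Kr(p)`, as a function (defined via choice: for a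
non-crossing partition `p` the complement exists and is unique). -/
noncomputable def kr {m : ℕ} (p : Finset (Finset (Fin m))) : Finset (Finset (Fin m)) :=
  if h : ∃ q, IsKr p q then h.choose else ∅
/-- The reduction map `Red : [(k+1)n] → [n]`, sending `x` to its residue mod `n`
(with `Fin` modelling, `x ↦ x % n`). -/
def red {k n : ℕ} (x : Fin ((k + 1) * n)) : Fin n :=
  ⟨x.1 % n, Nat.mod_lt _ (Nat.pos_of_ne_zero (by rintro rfl; exact absurd x.2 (by simp)))⟩

/-- The image of a collection of blocks under the reduction map. -/
noncomputable def redPart {k n : ℕ} (P : Finset (Finset (Fin ((k + 1) * n)))) :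
    Finset (Finset (Fin n)) :=
  P.image fun B => B.image red

/-- The reduction map on the interleaved set, preserving bars. -/
def redInterl {k n : ℕ} (x : Interl ((k + 1) * n)) : Interl n :=
  toLex (red (ofLex x).1, (ofLex x).2)

/-- `NC^{(k)}(n)`: the non-crossing partitions of `[(k+1)n]` satisfying the mod `n`
reduction property, i.e. `Red(π)` is a non-crossing partition of `[n]` and
`Red(Kr(π))` is a non-crossing partition of `[n̄]`. -/
def NCk (k n : ℕ) : Set (Finset (Finset (Fin ((k + 1) * n)))) :=
  {π | IsPartition π ∧ IsNonCrossing π ∧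
       IsPartition (redPart π) ∧ IsNonCrossing (redPart π) ∧
       IsPartition (redPart (kr π)) ∧ IsNonCrossing (redPart (kr π))}
section AuxA
open Finset

variable {N : ℕ}

lemma lex_lt_iff {a b : Fin N} {s t : Bool} :
    toLex (a, s) < toLex (b, t) ↔ a < b ∨ (a = b ∧ s = false ∧ t = true) := by
  rw [Prod.Lex.lt_iff]; simp [Bool.lt_iff]

lemma mem_unbar {B : Finset (Fin N)} {x : Fin N} {s : Bool} :
    toLex (x, s) ∈ unbar B ↔ x ∈ B ∧ s = false := by
  simp only [unbar, Finset.mem_image, toLex_inj, Prod.mk.injEq]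
  constructor
  · rintro ⟨i, hi, rfl, rfl⟩; exact ⟨hi, rfl⟩
  · rintro ⟨hx, rfl⟩; exact ⟨x, hx, rfl, rfl⟩

lemma mem_barred {B : Finset (Fin N)} {x : Fin N} {s : Bool} :
    toLex (x, s) ∈ barred B ↔ x ∈ B ∧ s = true := by
  simp only [barred, Finset.mem_image, toLex_inj, Prod.mk.injEq]
  constructor
  · rintro ⟨i, hi, rfl, rfl⟩; exact ⟨hi, rfl⟩
  · rintro ⟨hx, rfl⟩; exact ⟨x, hx, rfl, rfl⟩

lemma unbar_mem_unionPart {p q : Finset (Finset (Fin N))} {B : Finset (Fin N)} (h : B ∈ p) :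
    unbar B ∈ unionPart p q :=
  Finset.mem_union_left _ (Finset.mem_image_of_mem _ h)

lemma barred_mem_unionPart {p q : Finset (Finset (Fin N))} {B : Finset (Fin N)} (h : B ∈ q) :
    barred B ∈ unionPart p q :=
  Finset.mem_union_right _ (Finset.mem_image_of_mem _ h)

lemma pure_unionPart {p q : Finset (Finset (Fin N))} {W : Finset (Interl N)}
    (hW : W ∈ unionPart p q) {x y : Fin N} {s t : Bool}
    (hx : toLex (x, s) ∈ W) (hy : toLex (y, t) ∈ W) : s = t := by
  rcases Finset.mem_union.1 hW with h | h <;> obtain ⟨P, _, rfl⟩ := Finset.mem_image.1 h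
  · rw [mem_unbar] at hx hy; rw [hx.2, hy.2]
  · rw [mem_barred] at hx hy; rw [hx.2, hy.2]

noncomputable def IsPartition.blockOf {X : Type*} {P : Finset (Finset X)}
    (h : IsPartition P) (x : X) : Finset X :=
  (h.2 x).choose

lemma IsPartition.blockOf_mem {X : Type*} {P : Finset (Finset X)} (h : IsPartition P) (x : X) :
    h.blockOf x ∈ P := (h.2 x).choose_spec.1.1

lemma IsPartition.mem_blockOf {X : Type*} {P : Finset (Finset X)} (h : IsPartition P) (x : X) :
    x ∈ h.blockOf x := (h.2 x).choose_spec.1.2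

lemma IsPartition.eq_blockOf {X : Type*} {P : Finset (Finset X)} (h : IsPartition P)
    {x : X} {B : Finset X} (hB : B ∈ P) (hx : x ∈ B) : B = h.blockOf x :=
  (h.2 x).choose_spec.2 B ⟨hB, hx⟩

lemma IsPartition.block_eq {X : Type*} {P : Finset (Finset X)} (h : IsPartition P)
    {x : X} {B B' : Finset X} (hB : B ∈ P) (hB' : B' ∈ P) (hx : x ∈ B) (hx' : x ∈ B') :
    B = B' := by rw [h.eq_blockOf hB hx, h.eq_blockOf hB' hx']

lemma lex_lt_of_lt {a b : Fin N} {s t : Bool} (h : a < b) : toLex (a, s) < toLex (b, t) :=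
  lex_lt_iff.2 (Or.inl h)

lemma lex_lt_of_le_ft {a b : Fin N} (h : a ≤ b) : toLex (a, false) < toLex (b, true) := by
  rcases lt_or_eq_of_le h with h | h
  · exact lex_lt_of_lt h
  · exact lex_lt_iff.2 (Or.inr ⟨h, rfl, rfl⟩)

lemma lex_lt_ft_le {a b : Fin N} (h : toLex (a, false) < toLex (b, true)) : a ≤ b := by
  rcases lex_lt_iff.1 h with h | h
  · exact le_of_lt h
  · exact le_of_eq h.1

lemma lex_lt_tf_lt {a b : Fin N} (h : toLex (a, true) < toLex (b, false)) : a < b := by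
  rcases lex_lt_iff.1 h with h | h
  · exact h
  · exact absurd h.2.1 (by simp)

lemma lex_lt_same_lt {a b : Fin N} {s : Bool} (h : toLex (a, s) < toLex (b, s)) : a < b := by
  rcases lex_lt_iff.1 h with h | h
  · exact h
  · rw [h.2.1] at h; exact absurd h.2.2 (by simp)

end AuxA
section AuxB

variable {n : ℕ}

/-- cyclic distance from `a` to `b` in `Fin n`. -/
def cdist (n : ℕ) (a b : Fin n) : ℕ := (b.1 + n - a.1) % n

lemma cdist_eq (a b : Fin n) :
    cdist n a b = if a.1 ≤ b.1 then b.1 - a.1 else b.1 + n - a.1 := by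
  have ha := a.2; have hb := b.2
  unfold cdist
  split
  · have h : b.1 + n - a.1 = (b.1 - a.1) + n := by omega
    rw [h, Nat.add_mod_right, Nat.mod_eq_of_lt (by omega)]
  · rw [Nat.mod_eq_of_lt (by omega)]

lemma cdist_lt (a b : Fin n) : cdist n a b < n :=
  Nat.mod_lt _ a.pos

lemma cdist_eq_zero_iff (a b : Fin n) : cdist n a b = 0 ↔ a = b := by
  rw [cdist_eq, Fin.ext_iff]
  have := a.2; have := b.2
  split <;> omega

lemma add_cdist_mod (a b : Fin n) : (a.1 + cdist n a b) % n = b.1 := by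
  rw [cdist_eq]
  have := a.2; have := b.2
  split
  · have h : a.1 + (b.1 - a.1) = b.1 := by omega
    rw [h, Nat.mod_eq_of_lt b.2]
  · have h : a.1 + (b.1 + n - a.1) = b.1 + n := by omega
    rw [h, Nat.add_mod_right, Nat.mod_eq_of_lt b.2]

/-- `r` lies in the cyclic interval `(i, j]` of `Fin n`. -/
def InCyc (n : ℕ) (i j r : Fin n) : Prop :=
  0 < cdist n i r ∧ cdist n i r ≤ cdist n i j

lemma InCyc_of_lt {i j r : Fin n} (hij : i < j) : InCyc n i j r ↔ i < r ∧ r ≤ j := by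
  unfold InCyc
  rw [cdist_eq, cdist_eq, Fin.lt_def, Fin.le_def]
  rw [Fin.lt_def] at hij
  have := i.2; have := j.2; have := r.2
  split <;> split <;> omega

lemma InCyc_swap {i j r : Fin n} (hij : i ≠ j) : InCyc n j i r ↔ ¬ InCyc n i j r := by
  unfold InCyc
  rw [cdist_eq, cdist_eq, cdist_eq, cdist_eq]
  have hij' : i.1 ≠ j.1 := fun h => hij (Fin.ext h)
  have := i.2; have := j.2; have := r.2
  split <;> split <;> split <;> split <;> omega

variable {k : ℕ}

lemma npos (x : Fin ((k+1)*n)) : 0 < n := by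
  rcases Nat.eq_zero_or_pos n with h | h
  · exfalso; have h2 : x.1 < (k+1)*n := x.2; subst h; simp at h2
  · exact h

lemma cdist_char {a b : Fin n} {d : ℕ} (hd : d < n) (h : (a.1 + d) % n = b.1) :
    d = cdist n a b := by
  have h2 := add_cdist_mod a b
  have h3 : (a.1 + d) % n = (a.1 + cdist n a b) % n := by rw [h, h2]
  have h4 : d % n = cdist n a b % n := Nat.ModEq.add_left_cancel' a.1 h3
  rwa [Nat.mod_eq_of_lt hd, Nat.mod_eq_of_lt (cdist_lt a b)] at h4

lemma red_val (x : Fin ((k+1)*n)) : (red x).1 = x.1 % n := rfl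

lemma red_mk {i : Fin n} (h : i.1 < (k+1)*n) : red (⟨i.1, h⟩ : Fin ((k+1)*n)) = i :=
  Fin.ext (by rw [red_val]; exact Nat.mod_eq_of_lt i.2)

/-- reduction of an element `u + D`. -/
lemma red_add {u : Fin ((k+1)*n)} {r : Fin n} {D : ℕ}
    (hD : D % n = cdist n (red u) r) (h : u.1 + D < (k+1)*n) :
    red (⟨u.1 + D, h⟩ : Fin ((k+1)*n)) = r := by
  apply Fin.ext
  rw [red_val]
  have h1 : (u.1 + D) % n = ((red u).1 + cdist n (red u) r) % n := by
    rw [Nat.add_mod, ← hD]; rfl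
  rw [h1]; exact add_cdist_mod _ _

/-- difference of two elements reduces to cyclic distance of reductions. -/
lemma sub_mod_eq_cdist {u e : Fin ((k+1)*n)} (h : u.1 ≤ e.1) :
    (e.1 - u.1) % n = cdist n (red u) (red e) := by
  have hn0 : 0 < n := npos u
  apply cdist_char (Nat.mod_lt _ hn0)
  show (u.1 % n + (e.1 - u.1) % n) % n = e.1 % n
  rw [← Nat.add_mod]
  congr 1
  omega

end AuxB
section AuxC
open Finset

variable {M : ℕ} {π Q : Finset (Finset (Fin M))}

/-- If `u,v` lie in one block of (a candidate for) `Kr π`, then no block of `π`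
crosses the interval `(u,v]`. -/
lemma kr_sep (hnc : IsNonCrossing (unionPart π Q))
    {C : Finset (Fin M)} (hC : C ∈ Q) {u v : Fin M} (hu : u ∈ C) (hv : v ∈ C)
    {B : Finset (Fin M)} (hB : B ∈ π) {t t' : Fin M} (ht : t ∈ B) (ht' : t' ∈ B)
    (h1 : u < t) (h2 : t ≤ v) (h3 : t' ≤ u ∨ v < t') : False := by
  rcases h3 with h3 | h3
  · obtain ⟨W, hW, hw1, hw2⟩ :=
      hnc (toLex (t', false)) (toLex (u, true)) (toLex (t, false)) (toLex (v, true))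
        (lex_lt_iff.2 (by rcases lt_or_eq_of_le h3 with h | h
                          · exact Or.inl h
                          · exact Or.inr ⟨h, rfl, rfl⟩))
        (lex_lt_iff.2 (Or.inl h1)) (lex_lt_iff.2 (by
          rcases lt_or_eq_of_le h2 with h | h
          · exact Or.inl h
          · exact Or.inr ⟨h, rfl, rfl⟩))
        ⟨unbar B, unbar_mem_unionPart hB, mem_unbar.2 ⟨ht', rfl⟩, mem_unbar.2 ⟨ht, rfl⟩⟩
        ⟨barred C, barred_mem_unionPart hC, mem_barred.2 ⟨hu, rfl⟩, mem_barred.2 ⟨hv, rfl⟩⟩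
    exact absurd (pure_unionPart hW hw1 hw2) (by simp)
  · obtain ⟨W, hW, hw1, hw2⟩ :=
      hnc (toLex (u, true)) (toLex (t, false)) (toLex (v, true)) (toLex (t', false))
        (lex_lt_iff.2 (Or.inl h1))
        (lex_lt_iff.2 (by rcases lt_or_eq_of_le h2 with h | h
                          · exact Or.inl h
                          · exact Or.inr ⟨h, rfl, rfl⟩))
        (lex_lt_iff.2 (Or.inl h3))
        ⟨barred C, barred_mem_unionPart hC, mem_barred.2 ⟨hu, rfl⟩, mem_barred.2 ⟨hv, rfl⟩⟩
        ⟨unbar B, unbar_mem_unionPart hB, mem_unbar.2 ⟨ht, rfl⟩, mem_unbar.2 ⟨ht', rfl⟩⟩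
    exact absurd (pure_unionPart hW hw1 hw2) (by simp)

/-- Conversely, an interval `(u,v]` crossed by no block of `π` yields a common
block of `Kr π` containing `u` and `v`. -/
lemma pair_join (hπp : IsPartition π) (hπnc : IsNonCrossing π)
    (hkr : IsKr π Q) {u v : Fin M} (huv : u < v)
    (hsep : ∀ B ∈ π, ∀ t ∈ B, ∀ t' ∈ B, u < t → t ≤ v → (t' ≤ u ∨ v < t') → False) :
    ∃ C ∈ Q, u ∈ C ∧ v ∈ C := by
  classical
  set f : Fin M → Finset (Fin M) := fun x => if x = u ∨ x = v then {u, v} else {x} with hf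
  set q' : Finset (Finset (Fin M)) := Finset.univ.image f with hq'
  have hfx : ∀ x, x ∈ f x := by
    intro x
    by_cases h : x = u ∨ x = v
    · simp only [hf, if_pos h]
      rcases h with h | h <;> simp [h]
    · simp [hf, if_neg h]
  have hfq' : ∀ x, f x ∈ q' := fun x => Finset.mem_image_of_mem f (Finset.mem_univ x)
  have hblocks : ∀ W ∈ q', ∀ x ∈ W, ∀ y ∈ W, x ≠ y → W = {u, v} := by
    intro W hW x hx y hy hxy
    obtain ⟨z, _, rfl⟩ := Finset.mem_image.1 hW
    by_cases h : z = u ∨ z = v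
    · simp only [hf, if_pos h]
    · exfalso
      simp only [hf, if_neg h, Finset.mem_singleton] at hx hy
      exact hxy (hx.trans hy.symm)
  have hpart : IsPartition q' := by
    constructor
    · intro W hW
      obtain ⟨z, _, rfl⟩ := Finset.mem_image.1 hW
      exact ⟨z, hfx z⟩
    · intro x
      refine ⟨f x, ⟨hfq' x, hfx x⟩, ?_⟩
      rintro W ⟨hW, hxW⟩
      obtain ⟨z, _, rfl⟩ := Finset.mem_image.1 hW
      by_cases h : z = u ∨ z = v
      · simp only [hf, if_pos h] at hxW ⊢
        have hx : x = u ∨ x = v := by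
          rcases Finset.mem_insert.1 hxW with h' | h'
          · exact Or.inl h'
          · exact Or.inr (Finset.mem_singleton.1 h')
        simp only [if_pos hx]
      · simp only [hf, if_neg h, Finset.mem_singleton] at hxW
        subst hxW
        rfl
  have hnc2 : IsNonCrossing (unionPart π q') := by
    rintro a b c d hab hbc hcd ⟨B₁, hB₁, ha, hc⟩ ⟨B₂, hB₂, hb, hd⟩
    obtain ⟨a1, s1, rfl⟩ : ∃ x s, a = toLex (x, s) := ⟨(ofLex a).1, (ofLex a).2, rfl⟩
    obtain ⟨b1, s2, rfl⟩ : ∃ x s, b = toLex (x, s) := ⟨(ofLex b).1, (ofLex b).2, rfl⟩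
    obtain ⟨c1, s3, rfl⟩ : ∃ x s, c = toLex (x, s) := ⟨(ofLex c).1, (ofLex c).2, rfl⟩
    obtain ⟨d1, s4, rfl⟩ : ∃ x s, d = toLex (x, s) := ⟨(ofLex d).1, (ofLex d).2, rfl⟩
    have pairUV : ∀ {x y : Fin M}, x ∈ ({u, v} : Finset (Fin M)) →
        y ∈ ({u, v} : Finset (Fin M)) → x < y → x = u ∧ y = v := by
      intro x y hx hy hxy
      simp only [Finset.mem_insert, Finset.mem_singleton] at hx hy
      rcases hx with rfl | rfl <;> rcases hy with rfl | rfl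
      · exact absurd hxy (lt_irrefl _)
      · exact ⟨rfl, rfl⟩
      · exact absurd (hxy.trans huv) (lt_irrefl _)
      · exact absurd hxy (lt_irrefl _)
    rcases Finset.mem_union.1 hB₁ with h1 | h1 <;>
      obtain ⟨P₁, hP₁, rfl⟩ := Finset.mem_image.1 h1 <;>
    rcases Finset.mem_union.1 hB₂ with h2 | h2 <;>
      obtain ⟨P₂, hP₂, rfl⟩ := Finset.mem_image.1 h2
    · -- unbar / unbar
      rw [mem_unbar] at ha hb hc hd
      obtain ⟨ha, rfl⟩ := ha; obtain ⟨hb, rfl⟩ := hb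
      obtain ⟨hc, rfl⟩ := hc; obtain ⟨hd, rfl⟩ := hd
      obtain ⟨W, hW, hw1, hw2⟩ := hπnc a1 b1 c1 d1 (lex_lt_same_lt hab) (lex_lt_same_lt hbc)
        (lex_lt_same_lt hcd) ⟨P₁, hP₁, ha, hc⟩ ⟨P₂, hP₂, hb, hd⟩
      exact ⟨unbar W, unbar_mem_unionPart hW, mem_unbar.2 ⟨hw1, rfl⟩, mem_unbar.2 ⟨hw2, rfl⟩⟩
    · -- unbar / barred
      exfalso
      rw [mem_unbar] at ha hc
      rw [mem_barred] at hb hd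
      obtain ⟨ha, rfl⟩ := ha; obtain ⟨hb, rfl⟩ := hb
      obtain ⟨hc, rfl⟩ := hc; obtain ⟨hd, rfl⟩ := hd
      have hbc' : b1 < c1 := lex_lt_tf_lt hbc
      have hcd' : c1 ≤ d1 := lex_lt_ft_le hcd
      have hP₂eq := hblocks P₂ hP₂ b1 hb d1 hd (ne_of_lt (lt_of_lt_of_le hbc' hcd'))
      rw [hP₂eq] at hb hd
      obtain ⟨rfl, rfl⟩ := pairUV hb hd (lt_of_lt_of_le hbc' hcd')
      exact hsep P₁ hP₁ c1 hc a1 ha hbc' hcd' (Or.inl (lex_lt_ft_le hab))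
    · -- barred / unbar
      exfalso
      rw [mem_barred] at ha hc
      rw [mem_unbar] at hb hd
      obtain ⟨ha, rfl⟩ := ha; obtain ⟨hb, rfl⟩ := hb
      obtain ⟨hc, rfl⟩ := hc; obtain ⟨hd, rfl⟩ := hd
      have hab' : a1 < b1 := lex_lt_tf_lt hab
      have hbc' : b1 ≤ c1 := lex_lt_ft_le hbc
      have hcd' : c1 < d1 := lex_lt_tf_lt hcd
      have hP₁eq := hblocks P₁ hP₁ a1 ha c1 hc (ne_of_lt (lt_of_lt_of_le hab' hbc'))
      rw [hP₁eq] at ha hc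
      obtain ⟨rfl, rfl⟩ := pairUV ha hc (lt_of_lt_of_le hab' hbc')
      exact hsep P₂ hP₂ b1 hb d1 hd hab' hbc' (Or.inr hcd')
    · -- barred / barred
      exfalso
      rw [mem_barred] at ha hb hc hd
      obtain ⟨ha, rfl⟩ := ha; obtain ⟨hb, rfl⟩ := hb
      obtain ⟨hc, rfl⟩ := hc; obtain ⟨hd, rfl⟩ := hd
      have hab' : a1 < b1 := lex_lt_same_lt hab
      have hbc' : b1 < c1 := lex_lt_same_lt hbc
      have hcd' : c1 < d1 := lex_lt_same_lt hcd
      have hP₁eq := hblocks P₁ hP₁ a1 ha c1 hc (ne_of_lt (hab'.trans hbc'))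
      have hP₂eq := hblocks P₂ hP₂ b1 hb d1 hd (ne_of_lt (hbc'.trans hcd'))
      rw [hP₁eq] at ha hc
      rw [hP₂eq] at hb hd
      obtain ⟨rfl, rfl⟩ := pairUV ha hc (hab'.trans hbc')
      obtain ⟨rfl, h2'⟩ := pairUV hb hd (hbc'.trans hcd')
      exact absurd hab' (lt_irrefl _)
  have href := hkr.2.2 q' hpart hnc2
  have hmemq' : ({u, v} : Finset (Fin M)) ∈ q' := by
    have := hfq' u
    rw [hf] at this
    simpa using this
  obtain ⟨C, hC, hsub⟩ := href _ hmemq'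
  exact ⟨C, hC, hsub (by simp), hsub (by simp)⟩

end AuxC
section AuxD
open Finset

variable {k n : ℕ} {π Q : Finset (Finset (Fin ((k+1)*n)))}

/-- Key lemma: a block of `Q = Kr π` cannot "cross mod n" a block of `π`. -/
lemma KL (hπp : IsPartition π) (hQp : IsPartition Q)
    (hUnc : IsNonCrossing (unionPart π Q))
    (hRπ : IsPartition (redPart π)) (hRQ : IsPartition (redPart Q)) :
    ∀ d : ℕ, ∀ u v : Fin ((k+1)*n), u < v → v.1 - u.1 = d →
      ∀ C ∈ Q, u ∈ C → v ∈ C →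
      ∀ B ∈ π, ∀ x ∈ B, ∀ y ∈ B,
      ¬ InCyc n (red u) (red v) (red x) → InCyc n (red u) (red v) (red y) → False := by
  intro d
  induction d using Nat.strong_induction_on with
  | _ d IH =>
  intro u v huv hd C hC hu hv B hB x hx y hy hxI hyI
  have hn0 : 0 < n := npos u
  set i := red u with hi
  set j := red v with hj
  set a := red x with ha
  set c := red y with hc
  obtain ⟨δ, hδ⟩ : ∃ δ, δ = cdist n i j := ⟨_, rfl⟩
  obtain ⟨dc, hdc⟩ : ∃ d0, d0 = cdist n i c := ⟨_, rfl⟩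
  have hyI' : 0 < dc ∧ dc ≤ δ := by rw [hδ, hdc]; exact hyI
  have hδpos : 0 < δ := lt_of_lt_of_le hyI'.1 hyI'.2
  have hδlt : δ < n := hδ ▸ cdist_lt i j
  have hdclt : dc < n := lt_of_le_of_lt hyI'.2 hδlt
  have hij : i ≠ j := by
    intro hcon
    rw [hcon, (cdist_eq_zero_iff j j).2 rfl] at hδ
    omega
  have huv' : u.1 < v.1 := huv
  have hdm : (v.1 - u.1) % n = δ := by rw [hδ]; exact sub_mod_eq_cdist (le_of_lt huv')
  obtain ⟨t, htn⟩ : ∃ t, v.1 - u.1 = δ + n * t := by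
    refine ⟨(v.1 - u.1) / n, ?_⟩
    have h0 := Nat.div_add_mod (v.1 - u.1) n
    rw [hdm] at h0
    omega
  have hvM := v.2
  have hztlt : u.1 + (dc + n * t) < (k+1)*n := by omega
  set zt : Fin ((k+1)*n) := ⟨u.1 + (dc + n * t), hztlt⟩ with hzt
  have hDzt : (dc + n * t) % n = cdist n (red u) c := by
    rw [← hi, ← hdc, Nat.add_mul_mod_self_left]
    exact Nat.mod_eq_of_lt hdclt
  have hred_zt : red zt = c := red_add hDzt hztlt
  have hzt_in1 : u < zt := by
    rw [Fin.lt_def]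
    show u.1 < u.1 + (dc + n * t)
    omega
  have hzt_in2 : zt ≤ v := by
    rw [Fin.le_def]
    show u.1 + (dc + n * t) ≤ v.1
    omega
  set Bs := hπp.blockOf zt with hBsdef
  have hBs : Bs ∈ π := hπp.blockOf_mem zt
  have hztBs : zt ∈ Bs := hπp.mem_blockOf zt
  have hBsub : ∀ e ∈ Bs, u.1 < e.1 ∧ e.1 ≤ v.1 := by
    intro e he
    rcases le_or_gt e u with h | h
    · exact (kr_sep hUnc hC hu hv hBs hztBs he hzt_in1 hzt_in2 (Or.inl h)).elim
    · rcases le_or_gt e v with h' | h'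
      · exact ⟨h, h'⟩
      · exact (kr_sep hUnc hC hu hv hBs hztBs he hzt_in1 hzt_in2 (Or.inr h')).elim
  -- find an element w of Bs with residue a
  have hcBs : c ∈ Bs.image red := Finset.mem_image.2 ⟨zt, hztBs, hred_zt⟩
  have hcB : c ∈ B.image red := Finset.mem_image.2 ⟨y, hy, hc.symm⟩
  have hEqB : Bs.image red = B.image red :=
    hRπ.block_eq (Finset.mem_image_of_mem _ hBs) (Finset.mem_image_of_mem _ hB) hcBs hcB
  have haB : a ∈ B.image red := Finset.mem_image.2 ⟨x, hx, ha.symm⟩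
  obtain ⟨w, hwBs, hredw⟩ := Finset.mem_image.1 (hEqB ▸ haB)
  have hw_in := hBsub w hwBs
  -- the element g at position u + n*t has residue i
  have hglt : u.1 + n * t < (k+1)*n := by omega
  set g : Fin ((k+1)*n) := ⟨u.1 + n * t, hglt⟩ with hg
  have hgval : g.1 = u.1 + n * t := rfl
  have hred_g : red g = i := by
    apply red_add
    rw [← hi, (cdist_eq_zero_iff i i).2 rfl]
    exact Nat.mul_mod_right n t
  have hwg : w.1 ≤ g.1 := by
    by_contra hgw
    push_neg at hgw
    have h1 : (w.1 - g.1) % n = cdist n (red g) (red w) := sub_mod_eq_cdist (le_of_lt hgw)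
    rw [hred_g, hredw] at h1
    have h2 : w.1 - g.1 < n := by
      have h3 := hw_in.2
      omega
    rw [Nat.mod_eq_of_lt h2] at h1
    refine hxI ⟨?_, ?_⟩
    · rw [← h1]
      omega
    · rw [← h1, ← hδ]
      have h3 := hw_in.2
      omega
  rcases Nat.eq_zero_or_pos t with ht0 | htpos
  · -- base case : no room for w
    have h1 := hw_in.1
    subst ht0
    have h2 : n * 0 = 0 := rfl
    omega
  -- inductive case
  have hztval : zt.1 = u.1 + (dc + n * t) := rfl
  have hug : u.1 < g.1 := by
    have : 0 < n * t := Nat.mul_pos hn0 htpos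
    omega
  have hgzt : g.1 < zt.1 := by
    rw [hgval, hztval]; omega
  set C' := hQp.blockOf g with hC'def
  have hC' : C' ∈ Q := hQp.blockOf_mem g
  have hgC' : g ∈ C' := hQp.mem_blockOf g
  have hiC' : i ∈ C'.image red := Finset.mem_image.2 ⟨g, hgC', hred_g⟩
  have hiC : i ∈ C.image red := Finset.mem_image.2 ⟨u, hu, hi.symm⟩
  have hEqC : C'.image red = C.image red :=
    hRQ.block_eq (Finset.mem_image_of_mem _ hC') (Finset.mem_image_of_mem _ hC) hiC' hiC
  have hjC : j ∈ C.image red := Finset.mem_image.2 ⟨v, hv, hj.symm⟩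
  obtain ⟨h, hhC', hredh⟩ := Finset.mem_image.1 (hEqC ▸ hjC)
  have h_ge_w : w.1 ≤ h.1 := by
    by_contra hlt
    push_neg at hlt
    obtain ⟨W, hW, h1, h2⟩ := hUnc (toLex (h, true)) (toLex (w, false)) (toLex (g, true))
        (toLex (zt, false))
        (lex_lt_of_lt (Fin.lt_def.2 hlt)) (lex_lt_of_le_ft (Fin.le_def.2 hwg))
        (lex_lt_of_lt (Fin.lt_def.2 hgzt))
        ⟨barred C', barred_mem_unionPart hC', mem_barred.2 ⟨hhC', rfl⟩,
          mem_barred.2 ⟨hgC', rfl⟩⟩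
        ⟨unbar Bs, unbar_mem_unionPart hBs, mem_unbar.2 ⟨hwBs, rfl⟩,
          mem_unbar.2 ⟨hztBs, rfl⟩⟩
    exact absurd (pure_unionPart hW h1 h2) (by simp)
  have h_lt_zt : h.1 < zt.1 := by
    by_contra hge
    push_neg at hge
    obtain ⟨W, hW, h1, h2⟩ := hUnc (toLex (w, false)) (toLex (g, true)) (toLex (zt, false))
        (toLex (h, true))
        (lex_lt_of_le_ft (Fin.le_def.2 hwg)) (lex_lt_of_lt (Fin.lt_def.2 hgzt))
        (lex_lt_of_le_ft (Fin.le_def.2 hge))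
        ⟨unbar Bs, unbar_mem_unionPart hBs, mem_unbar.2 ⟨hwBs, rfl⟩,
          mem_unbar.2 ⟨hztBs, rfl⟩⟩
        ⟨barred C', barred_mem_unionPart hC', mem_barred.2 ⟨hgC', rfl⟩,
          mem_barred.2 ⟨hhC', rfl⟩⟩
    exact absurd (pure_unionPart hW h1 h2) (by simp)
  have hgh : g ≠ h := by
    intro hcon
    apply hij
    rw [← hred_g, ← hredh, hcon]
  rcases Nat.lt_or_ge h.1 g.1 with hcase | hcase
  · -- new pair (h, g), with reversed residues
    have hnew : g.1 - h.1 < d := by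
      have h1 := hw_in.1
      rw [← hd]
      omega
    refine IH _ hnew h g (Fin.lt_def.2 hcase) rfl C' hC' hhC' hgC' B hB y hy x hx ?_ ?_
    · rw [hredh, hred_g]
      intro hcon
      exact (InCyc_swap hij).1 hcon hyI
    · rw [hredh, hred_g]
      exact (InCyc_swap hij).2 hxI
  · -- new pair (g, h)
    have hghlt : g.1 < h.1 := lt_of_le_of_ne hcase (fun hcon => hgh (Fin.ext hcon))
    have hnew : h.1 - g.1 < d := by
      have : 0 < n * t := Nat.mul_pos hn0 htpos
      rw [← hd]
      omega
    refine IH _ hnew g h (Fin.lt_def.2 hghlt) rfl C' hC' hgC' hhC' B hB x hx y hy ?_ ?_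
    · rw [hred_g, hredh]
      exact hxI
    · rw [hred_g, hredh]
      exact hyI

end AuxD
section AuxE
open Finset

variable {k n : ℕ} {π Q : Finset (Finset (Fin ((k+1)*n)))}

/-- Lifting lemma: a non-crossing pair `(i,j)` downstairs lifts to a pair in a
common block of `Kr π` upstairs. -/
lemma L1 (hπp : IsPartition π) (hπnc : IsNonCrossing π) (hkr : IsKr π Q)
    {i j : Fin n} (hij : i < j)
    (hsep : ∀ B ∈ π, (∀ e ∈ B, i < red e ∧ red e ≤ j) ∨
      (∀ e ∈ B, ¬(i < red e ∧ red e ≤ j))) :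
    ∃ C ∈ Q, ∃ u ∈ C, ∃ v ∈ C, red u = i ∧ red v = j := by
  classical
  have hn0 : 0 < n := i.pos
  have hmul : ∀ a b : ℕ, a ≤ b → n * a ≤ n * b := fun a b h => Nat.mul_le_mul (le_refl n) h
  have hble : n ≤ (k+1)*n := by
    calc n = n*1 := (Nat.mul_one n).symm
    _ ≤ n*(k+1) := Nat.mul_le_mul (le_refl n) (by omega)
    _ = (k+1)*n := Nat.mul_comm _ _
  set Closed : ℕ → Prop := fun s => ∀ B ∈ π, (∀ e ∈ B, i < red e ∧ red e ≤ j) →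
    ∀ e ∈ B, ∀ e' ∈ B, e.1 < n*(s+1) → e'.1 < n*(s+1) with hClosed
  have hck : Closed k := by
    intro B _ _ e _ e' he' _
    have h2 := e'.2
    have h3 : (k+1)*n = n*(k+1) := Nat.mul_comm _ _
    omega
  have hex : ∃ s, Closed s := ⟨k, hck⟩
  set q0 := Nat.find hex with hq0def
  have hq0 : Closed q0 := Nat.find_spec hex
  have hq0min : ∀ s, s < q0 → ¬ Closed s := fun s hs => Nat.find_min hex hs
  have hq0k : q0 ≤ k := Nat.find_min' hex hck
  have hulb : i.1 < (k+1)*n := lt_of_lt_of_le i.2 hble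
  set u : Fin ((k+1)*n) := ⟨i.1, hulb⟩ with hudef
  have hredu : red u = i := red_mk hulb
  have hvlb : j.1 + n*q0 < (k+1)*n := by
    have h1 := hmul q0 k hq0k
    have h2 : (k+1)*n = n*k + n := by ring
    have h3 := j.2
    omega
  set v : Fin ((k+1)*n) := ⟨j.1 + n*q0, hvlb⟩ with hvdef
  have hredv : red v = j := by
    apply Fin.ext
    rw [red_val]
    show (j.1 + n*q0) % n = j.1
    rw [Nat.mul_comm, Nat.add_mul_mod_self_right]
    exact Nat.mod_eq_of_lt j.2
  have huval : u.1 = i.1 := rfl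
  have hvval : v.1 = j.1 + n*q0 := rfl
  have huv : u < v := by
    rw [Fin.lt_def, huval, hvval]
    have := hij
    rw [Fin.lt_def] at this
    omega
  -- elements with residue ≤ j that are < n*(q0+1) lie weakly below v
  have hTop : ∀ e : Fin ((k+1)*n), red e ≤ j → e.1 < n*(q0+1) → e.1 ≤ j.1 + n*q0 := by
    intro e hej hlt
    have hdm : n * (e.1 / n) + (red e).1 = e.1 := by
      rw [red_val]; exact Nat.div_add_mod _ _
    have hejv : (red e).1 ≤ j.1 := hej
    rcases Nat.lt_or_ge (e.1 / n) (q0+1) with hcase | hcase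
    · have h1 := hmul (e.1/n) q0 (by omega)
      omega
    · have h1 := hmul (q0+1) (e.1/n) hcase
      omega
  have hsep' : ∀ B ∈ π, ∀ t ∈ B, ∀ t' ∈ B, u < t → t ≤ v → (t' ≤ u ∨ v < t') → False := by
    intro B hB t ht t' ht' h1 h2 h3
    have h1' : i.1 < t.1 := h1
    have h2' : t.1 ≤ j.1 + n*q0 := h2
    rcases hsep B hB with hInner | hOuter
    · -- B is an inner block
      obtain ⟨hti, htj⟩ := hInner t' ht'
      have hti' : i.1 < (red t').1 := hti
      have htj' : (red t').1 ≤ j.1 := htj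
      have hmle : (red t').1 ≤ t'.1 := by rw [red_val]; exact Nat.mod_le _ _
      rcases h3 with h3 | h3
      · have h3' : t'.1 ≤ i.1 := h3
        omega
      · have h3' : j.1 + n*q0 < t'.1 := h3
        have httop : t.1 < n*(q0+1) := by
          have hr : n*(q0+1) = n*q0 + n := by ring
          have := j.2
          omega
        have ht'top := hq0 B hB hInner t ht t' ht' httop
        have := hTop t' htj ht'top
        omega
    · -- B is an outer block
      have hto := hOuter t ht
      have hdm : n * (t.1 / n) + (red t).1 = t.1 := by
        rw [red_val]; exact Nat.div_add_mod _ _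
      obtain ⟨s, ρ, hsd, hρ⟩ : ∃ s ρ, n*s + ρ = t.1 ∧ ρ = (red t).1 :=
        ⟨t.1/n, (red t).1, hdm, rfl⟩
      have hρn : ρ < n := by rw [hρ]; exact (red t).2
      have hcases : ρ ≤ i.1 ∨ j.1 < ρ := by
        rcases not_and_or.1 hto with hρi | hρj
        · left; have : ¬ (i < red t) := hρi
          rw [Fin.lt_def] at this; omega
        · right; have : ¬ (red t ≤ j) := hρj
          rw [Fin.le_def] at this; omega
      -- define the gap index g1 with its properties
      obtain ⟨g1, hg1a, hg1b, hg1c, hg1d⟩ :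
          ∃ g1, 1 ≤ g1 ∧ g1 ≤ q0 ∧
            (∀ flo : Fin ((k+1)*n), i < red flo → red flo ≤ j → flo.1 < n*g1 → flo.1 < t.1) ∧
            (∀ fhi : Fin ((k+1)*n), i < red fhi → red fhi ≤ j → n*g1 ≤ fhi.1 → t.1 < fhi.1) := by
        rcases hcases with hρi | hρj
        · -- residue of t is ≤ i : gap index is s
          have hs1 : 1 ≤ s := by
            rcases Nat.eq_zero_or_pos s with h | h
            · subst h; simp at hsd; omega
            · exact h
          have hsq0 : s ≤ q0 := by
            rcases Nat.lt_or_ge s (q0+1) with h | h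
            · omega
            · exfalso
              have := hmul (q0+1) s h
              have hr : n*(q0+1) = n*q0 + n := by ring
              have := j.2
              omega
          refine ⟨s, hs1, hsq0, ?_, ?_⟩
          · intro flo _ _ hlt
            omega
          · intro fhi hfi _ hge
            have hdmf : n * (fhi.1 / n) + (red fhi).1 = fhi.1 := by
              rw [red_val]; exact Nat.div_add_mod _ _
            have hfi' : i.1 < (red fhi).1 := hfi
            rcases Nat.lt_or_ge (fhi.1/n) s with hc | hc
            · exfalso
              have h5 := hmul (fhi.1/n + 1) s (by omega)
              have hr : n*(fhi.1/n + 1) = n*(fhi.1/n) + n := by ring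
              have := (red fhi).2
              omega
            · have h5 := hmul s (fhi.1/n) hc
              omega
        · -- residue of t is > j : gap index is s+1
          have hsq0 : s + 1 ≤ q0 := by
            rcases Nat.lt_or_ge s q0 with h | h
            · omega
            · exfalso
              have := hmul q0 s h
              omega
          refine ⟨s+1, by omega, hsq0, ?_, ?_⟩
          · intro flo _ hfj hlt
            have hdmf : n * (flo.1 / n) + (red flo).1 = flo.1 := by
              rw [red_val]; exact Nat.div_add_mod _ _
            have hfj' : (red flo).1 ≤ j.1 := hfj
            rcases Nat.lt_or_ge (flo.1/n) (s+1) with hc | hc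
            · have h5 := hmul (flo.1/n) s (by omega)
              omega
            · exfalso
              have h5 := hmul (s+1) (flo.1/n) hc
              omega
          · intro fhi _ _ hge
            have hr : n*(s+1) = n*s + n := by ring
            omega
      -- get the straddling inner block from minimality of q0
      have hncl : ¬ Closed (g1 - 1) := hq0min _ (by omega)
      simp only [hClosed] at hncl
      push_neg at hncl
      obtain ⟨B₀, hB₀, hInner₀, flo, hflo, fhi, hfhi, hflolt, hfhige⟩ := hncl
      have hg11 : g1 - 1 + 1 = g1 := by omega
      rw [hg11] at hflolt hfhige
      have hfhige' : n*g1 ≤ fhi.1 := by omega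
      have hfloin := hInner₀ flo hflo
      have hfhiin := hInner₀ fhi hfhi
      have hflot : flo.1 < t.1 := hg1c flo hfloin.1 hfloin.2 hflolt
      have htfhi : t.1 < fhi.1 := hg1d fhi hfhiin.1 hfhiin.2 hfhige'
      have hBne : t ∉ B₀ := fun hcon => hto (hInner₀ t hcon)
      rcases h3 with h3 | h3
      · -- t' ≤ u
        have h3' : t'.1 ≤ i.1 := h3
        have hfloi : i.1 < flo.1 := by
          have ha : (red flo).1 ≤ flo.1 := by rw [red_val]; exact Nat.mod_le _ _
          have hb : i.1 < (red flo).1 := hfloin.1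
          omega
        obtain ⟨W, hW, hw1, hw2⟩ := hπnc t' flo t fhi
          (Fin.lt_def.2 (by omega)) (Fin.lt_def.2 hflot) (Fin.lt_def.2 htfhi)
          ⟨B, hB, ht', ht⟩ ⟨B₀, hB₀, hflo, hfhi⟩
        have hWB : W = B := hπp.block_eq hW hB hw1 ht'
        rw [hWB] at hw2
        exact hto ((hsep B hB).resolve_right (fun hOut => (hOut flo hw2) hfloin) t ht)
      · -- v < t'
        have h3' : j.1 + n*q0 < t'.1 := h3
        have hfhiv : fhi.1 ≤ j.1 + n*q0 := by
          apply hTop fhi hfhiin.2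
          apply hq0 B₀ hB₀ hInner₀ flo hflo fhi hfhi
          have h5 := hmul g1 (q0+1) (by omega)
          omega
        obtain ⟨W, hW, hw1, hw2⟩ := hπnc flo t fhi t'
          (Fin.lt_def.2 hflot) (Fin.lt_def.2 htfhi) (Fin.lt_def.2 (by omega))
          ⟨B₀, hB₀, hflo, hfhi⟩ ⟨B, hB, ht, ht'⟩
        have hWB : W = B₀ := hπp.block_eq hW hB₀ hw1 hflo
        rw [hWB] at hw2
        exact hBne hw2
  obtain ⟨C, hC, hu, hv⟩ := pair_join hπp hπnc hkr huv hsep'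
  exact ⟨C, hC, u, hu, v, hv, hredu, hredv⟩

end AuxE
section AuxF
open Finset

lemma kr_unique {M : ℕ} {p q1 q2 : Finset (Finset (Fin M))}
    (h1 : IsKr p q1) (h2 : IsKr p q2) : q1 = q2 := by
  have r12 := h2.2.2 q1 h1.1 h1.2.1
  have r21 := h1.2.2 q2 h2.1 h2.2.1
  have key : ∀ (qa qb : Finset (Finset (Fin M))), IsPartition qa → Refines qa qb →
      Refines qb qa → ∀ B ∈ qa, B ∈ qb := by
    intro qa qb hpa rab rba B hB
    obtain ⟨C, hC, hBC⟩ := rab B hB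
    obtain ⟨B', hB', hCB'⟩ := rba C hC
    obtain ⟨x, hx⟩ := hpa.1 B hB
    have hBB' : B = B' := hpa.block_eq hB hB' hx (hCB' (hBC hx))
    have hCB : C ⊆ B := by rw [hBB']; exact hCB'
    have : B = C := Finset.Subset.antisymm hBC hCB
    exact this ▸ hC
  ext B
  exact ⟨fun hB => key q1 q2 h1.1 r12 r21 B hB, fun hB => key q2 q1 h2.1 r21 r12 B hB⟩

theorem stmt10' (k n : ℕ) (hn : 1 ≤ n)
    (π : Finset (Finset (Fin ((k + 1) * n)))) (hπ : π ∈ NCk k n) :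
    kr (redPart π) = redPart (kr π) := by
  obtain ⟨hπp, hπnc, hRπp, hRπnc, hRKp, hRKnc⟩ := hπ
  have hex : ∃ q, IsKr π q := by
    by_contra hcon
    rw [kr, dif_neg hcon] at hRKp
    have hemp : redPart (∅ : Finset (Finset (Fin ((k+1)*n)))) = ∅ := rfl
    rw [hemp] at hRKp
    obtain ⟨B, hB, _⟩ := hRKp.2 ⟨0, hn⟩
    exact absurd hB.1 (Finset.notMem_empty B)
  have hkrs : IsKr π (kr π) := by rw [kr, dif_pos hex]; exact hex.choose_spec
  have hQp : IsPartition (kr π) := hkrs.1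
  have hUnc : IsNonCrossing (unionPart π (kr π)) := hkrs.2.1
  -- (ii) the union of the reductions is non-crossing
  have hii : IsNonCrossing (unionPart (redPart π) (redPart (kr π))) := by
    rintro a b c d hab hbc hcd ⟨B₁, hB₁, ha, hc⟩ ⟨B₂, hB₂, hb, hd⟩
    obtain ⟨a1, s1, rfl⟩ : ∃ x s, a = toLex (x, s) := ⟨(ofLex a).1, (ofLex a).2, rfl⟩
    obtain ⟨b1, s2, rfl⟩ : ∃ x s, b = toLex (x, s) := ⟨(ofLex b).1, (ofLex b).2, rfl⟩
    obtain ⟨c1, s3, rfl⟩ : ∃ x s, c = toLex (x, s) := ⟨(ofLex c).1, (ofLex c).2, rfl⟩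
    obtain ⟨d1, s4, rfl⟩ : ∃ x s, d = toLex (x, s) := ⟨(ofLex d).1, (ofLex d).2, rfl⟩
    rcases Finset.mem_union.1 hB₁ with h1 | h1 <;>
      obtain ⟨P₁, hP₁, rfl⟩ := Finset.mem_image.1 h1 <;>
    rcases Finset.mem_union.1 hB₂ with h2 | h2 <;>
      obtain ⟨P₂, hP₂, rfl⟩ := Finset.mem_image.1 h2
    · -- unbar / unbar
      rw [mem_unbar] at ha hb hc hd
      obtain ⟨ha, rfl⟩ := ha; obtain ⟨hb, rfl⟩ := hb
      obtain ⟨hc, rfl⟩ := hc; obtain ⟨hd, rfl⟩ := hd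
      obtain ⟨W, hW, hw1, hw2⟩ := hRπnc a1 b1 c1 d1 (lex_lt_same_lt hab) (lex_lt_same_lt hbc)
        (lex_lt_same_lt hcd) ⟨P₁, hP₁, ha, hc⟩ ⟨P₂, hP₂, hb, hd⟩
      exact ⟨unbar W, unbar_mem_unionPart hW, mem_unbar.2 ⟨hw1, rfl⟩, mem_unbar.2 ⟨hw2, rfl⟩⟩
    · -- unbar / barred : the key mixed case
      exfalso
      rw [mem_unbar] at ha hc
      rw [mem_barred] at hb hd
      obtain ⟨ha, rfl⟩ := ha; obtain ⟨hb, rfl⟩ := hb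
      obtain ⟨hc, rfl⟩ := hc; obtain ⟨hd, rfl⟩ := hd
      obtain ⟨B, hB, rfl⟩ := Finset.mem_image.1 hP₁
      obtain ⟨C, hC, rfl⟩ := Finset.mem_image.1 hP₂
      obtain ⟨x, hx, hredx⟩ := Finset.mem_image.1 ha
      obtain ⟨y, hy, hredy⟩ := Finset.mem_image.1 hc
      obtain ⟨u, hu, hredu⟩ := Finset.mem_image.1 hb
      obtain ⟨v, hv, hredv⟩ := Finset.mem_image.1 hd
      have hord1 : a1 ≤ b1 := lex_lt_ft_le hab
      have hord2 : b1 < c1 := lex_lt_tf_lt hbc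
      have hord3 : c1 ≤ d1 := lex_lt_ft_le hcd
      have hb1d1 : b1 < d1 := lt_of_lt_of_le hord2 hord3
      have hb1d1' : b1 ≠ d1 := ne_of_lt hb1d1
      have huvne : u ≠ v := by
        intro e; rw [e, hredv] at hredu; exact hb1d1' hredu.symm
      have hyin : InCyc n b1 d1 c1 := (InCyc_of_lt hb1d1).2 ⟨hord2, hord3⟩
      have hxout : ¬ InCyc n b1 d1 a1 := by
        intro hcon
        have := ((InCyc_of_lt hb1d1).1 hcon).1
        rw [Fin.lt_def] at this
        have := hord1
        rw [Fin.le_def] at this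
        omega
      rcases lt_or_gt_of_ne huvne with hlt | hlt
      · refine KL hπp hQp hUnc hRπp hRKp _ u v hlt rfl C hC hu hv B hB x hx y hy ?_ ?_
        · rw [hredu, hredv, hredx]; exact hxout
        · rw [hredu, hredv, hredy]; exact hyin
      · refine KL hπp hQp hUnc hRπp hRKp _ v u hlt rfl C hC hv hu B hB y hy x hx ?_ ?_
        · rw [hredu, hredv, hredy]
          intro hcon
          exact (InCyc_swap hb1d1').1 hcon hyin
        · rw [hredu, hredv, hredx]
          exact (InCyc_swap hb1d1').2 hxout
    · -- barred / unbar : the other mixed case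
      exfalso
      rw [mem_barred] at ha hc
      rw [mem_unbar] at hb hd
      obtain ⟨ha, rfl⟩ := ha; obtain ⟨hb, rfl⟩ := hb
      obtain ⟨hc, rfl⟩ := hc; obtain ⟨hd, rfl⟩ := hd
      obtain ⟨C, hC, rfl⟩ := Finset.mem_image.1 hP₁
      obtain ⟨B, hB, rfl⟩ := Finset.mem_image.1 hP₂
      obtain ⟨u, hu, hredu⟩ := Finset.mem_image.1 ha
      obtain ⟨v, hv, hredv⟩ := Finset.mem_image.1 hc
      obtain ⟨x, hx, hredx⟩ := Finset.mem_image.1 hd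
      obtain ⟨y, hy, hredy⟩ := Finset.mem_image.1 hb
      have hord1 : a1 < b1 := lex_lt_tf_lt hab
      have hord2 : b1 ≤ c1 := lex_lt_ft_le hbc
      have hord3 : c1 < d1 := lex_lt_tf_lt hcd
      have ha1c1 : a1 < c1 := lt_of_lt_of_le hord1 hord2
      have ha1c1' : a1 ≠ c1 := ne_of_lt ha1c1
      have huvne : u ≠ v := by
        intro e; rw [e, hredv] at hredu; exact ha1c1' hredu.symm
      have hyin : InCyc n a1 c1 b1 := (InCyc_of_lt ha1c1).2 ⟨hord1, hord2⟩
      have hxout : ¬ InCyc n a1 c1 d1 := by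
        intro hcon
        have := ((InCyc_of_lt ha1c1).1 hcon).2
        rw [Fin.le_def] at this
        have := hord3
        rw [Fin.lt_def] at this
        omega
      rcases lt_or_gt_of_ne huvne with hlt | hlt
      · refine KL hπp hQp hUnc hRπp hRKp _ u v hlt rfl C hC hu hv B hB x hx y hy ?_ ?_
        · rw [hredu, hredv, hredx]; exact hxout
        · rw [hredu, hredv, hredy]; exact hyin
      · refine KL hπp hQp hUnc hRπp hRKp _ v u hlt rfl C hC hv hu B hB y hy x hx ?_ ?_
        · rw [hredu, hredv, hredy]
          intro hcon
          exact (InCyc_swap ha1c1').1 hcon hyin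
        · rw [hredu, hredv, hredx]
          exact (InCyc_swap ha1c1').2 hxout
    · -- barred / barred
      rw [mem_barred] at ha hb hc hd
      obtain ⟨ha, rfl⟩ := ha; obtain ⟨hb, rfl⟩ := hb
      obtain ⟨hc, rfl⟩ := hc; obtain ⟨hd, rfl⟩ := hd
      obtain ⟨W, hW, hw1, hw2⟩ := hRKnc a1 b1 c1 d1 (lex_lt_same_lt hab) (lex_lt_same_lt hbc)
        (lex_lt_same_lt hcd) ⟨P₁, hP₁, ha, hc⟩ ⟨P₂, hP₂, hb, hd⟩
      exact ⟨barred W, barred_mem_unionPart hW, mem_barred.2 ⟨hw1, rfl⟩,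
        mem_barred.2 ⟨hw2, rfl⟩⟩
  -- (iii) maximality
  have hmax : ∀ q', IsPartition q' → IsNonCrossing (unionPart (redPart π) q') →
      Refines q' (redPart (kr π)) := by
    intro q' hq'p hq'nc
    have pairblk : ∀ i j : Fin n, i < j → (∃ Db ∈ q', i ∈ Db ∧ j ∈ Db) →
        ∃ E ∈ redPart (kr π), i ∈ E ∧ j ∈ E := by
      rintro i j hij ⟨Db, hDb, hiD, hjD⟩
      have hsep : ∀ B ∈ π, (∀ e ∈ B, i < red e ∧ red e ≤ j) ∨
          (∀ e ∈ B, ¬(i < red e ∧ red e ≤ j)) := by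
        intro B hB
        by_contra hcon
        push_neg at hcon
        obtain ⟨⟨e1, he1, he1p⟩, ⟨e2, he2, he2p⟩⟩ := hcon
        have he1p' : red e1 ≤ i ∨ j < red e1 := by
          by_cases h : i < red e1
          · exact Or.inr (he1p h)
          · exact Or.inl (not_lt.1 h)
        have hbd : barred Db ∈ unionPart (redPart π) q' := barred_mem_unionPart hDb
        have hub : unbar (B.image red) ∈ unionPart (redPart π) q' :=
          unbar_mem_unionPart (Finset.mem_image_of_mem _ hB)
        have hρ1 : red e2 ∈ B.image red := Finset.mem_image_of_mem _ he2
        have hρ2 : red e1 ∈ B.image red := Finset.mem_image_of_mem _ he1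
        rcases he1p' with hcase | hcase
        · -- red e1 ≤ i
          have hle : red e1 ≤ i := hcase
          obtain ⟨W, hW, hw1, hw2⟩ := hq'nc (toLex (red e1, false)) (toLex (i, true))
            (toLex (red e2, false)) (toLex (j, true))
            (lex_lt_of_le_ft hle) (lex_lt_of_lt he2p.1) (lex_lt_of_le_ft he2p.2)
            ⟨unbar (B.image red), hub, mem_unbar.2 ⟨hρ2, rfl⟩, mem_unbar.2 ⟨hρ1, rfl⟩⟩
            ⟨barred Db, hbd, mem_barred.2 ⟨hiD, rfl⟩, mem_barred.2 ⟨hjD, rfl⟩⟩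
          exact absurd (pure_unionPart hW hw1 hw2) (by simp)
        · -- j < red e1
          have hlt : j < red e1 := hcase
          obtain ⟨W, hW, hw1, hw2⟩ := hq'nc (toLex (i, true)) (toLex (red e2, false))
            (toLex (j, true)) (toLex (red e1, false))
            (lex_lt_of_lt he2p.1) (lex_lt_of_le_ft he2p.2) (lex_lt_of_lt hlt)
            ⟨barred Db, hbd, mem_barred.2 ⟨hiD, rfl⟩, mem_barred.2 ⟨hjD, rfl⟩⟩
            ⟨unbar (B.image red), hub, mem_unbar.2 ⟨hρ1, rfl⟩, mem_unbar.2 ⟨hρ2, rfl⟩⟩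
          exact absurd (pure_unionPart hW hw1 hw2) (by simp)
      obtain ⟨C, hC, u, hu, v, hv, hru, hrv⟩ := L1 hπp hπnc hkrs hij hsep
      exact ⟨C.image red, Finset.mem_image_of_mem _ hC,
        Finset.mem_image.2 ⟨u, hu, hru⟩, Finset.mem_image.2 ⟨v, hv, hrv⟩⟩
    intro D hD
    obtain ⟨r0, hr0⟩ := hq'p.1 D hD
    refine ⟨hRKp.blockOf r0, hRKp.blockOf_mem r0, ?_⟩
    intro r hr
    rcases lt_trichotomy r r0 with hlt | heq | hlt
    · obtain ⟨E, hE, hrE, hr0E⟩ := pairblk r r0 hlt ⟨D, hD, hr, hr0⟩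
      have : E = hRKp.blockOf r0 := hRKp.eq_blockOf hE hr0E
      exact this ▸ hrE
    · rw [heq]; exact hRKp.mem_blockOf r0
    · obtain ⟨E, hE, hr0E, hrE⟩ := pairblk r0 r hlt ⟨D, hD, hr0, hr⟩
      have : E = hRKp.blockOf r0 := hRKp.eq_blockOf hE hr0E
      exact this ▸ hrE
  have hKK : IsKr (redPart π) (redPart (kr π)) := ⟨hRKp, hii, hmax⟩
  have hex2 : ∃ q, IsKr (redPart π) q := ⟨_, hKK⟩
  rw [kr, dif_pos hex2]
  exact kr_unique hex2.choose_spec hKK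

end AuxF

/-- **Statement 10.** For every `π ∈ NC^{(k)}(n)`, the Kreweras complement of the
reduction equals the reduction of the Kreweras complement:
`Kr(Red(π)) = Red(Kr(π))` as partitions of `[n̄]` (identified with partitions of `[n]`). -/
theorem stmt10 (k n : ℕ) (hn : 1 ≤ n)
    (π : Finset (Finset (Fin ((k + 1) * n)))) (hπ : π ∈ NCk k n) :
    kr (redPart π) = redPart (kr π) := by
  exact stmt10' k n hn π hπ
end

section
/- Let A be a unital ℂ-algebra, K ⊆ ℝ a set having 0 as an accumulation point, and for each t ∈ K let μ_t : A → ℂ be a linear functional with μ_t(1_A) = 1. Suppose there exist linear functionals μ^{(0)}, ..., μ^{(k)} : A → ℂ such that for every a ∈ A, μ_t(a) = Σ_{i=0}^k (t^i/i!) μ^{(i)}(a) + o(t^k) as t → 0 along K. (Then necessarily μ^{(0)}(1_A) = 1 and μ^{(i)}(1_A) = 0 for i ≥ 1, so (A, (μ^{(i)})_{0≤i≤k}) is an infinitesimal noncommutative probability space of order k; let (κ_n^{(i)}) be its infinitesimal non-crossing cumulant functionals.) For each t ∈ K let ((κ_t)_n)_{n≥1} be the free cumulant functionals of (A, μ_t).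 Then for every n ≥ 1 and all a_1, ..., a_n ∈ A: (κ_t)_n(a_1,...,a_n) = Σ_{i=0}^k (t^i/i!) κ_n^{(i)}(a_1,...,a_n) + o(t^k) as t → 0 along K; equivalently, the i-th derivative at t = 0 of t ↦ (κ_t)_n(a_1,...,a_n) exists in this expansion sense and equals κ_n^{(i)}(a_1,...,a_n) for 0 ≤ i ≤ k. -/
open scoped BigOperators
attribute [local instance] Classical.propDecidable

/-- The defining (infinitesimal) moment-cumulant formula: the family
`(κ^{(i)}_n)_{n ≥ 1, 0 ≤ i ≤ k}` of multilinear functionals (indexed by `ℕ`, only the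
indices `i ≤ k` being relevant) is the family of infinitesimal non-crossing cumulant
functionals of `(A, (φ^{(i)})_{0 ≤ i ≤ k})`:
`Σ_{p ∈ NC(n)} Σ_{f : p → ℕ, Σ f = i} (i!/∏_V f(V)!) ∏_{V∈p} κ^{(f(V))}_{|V|}((a)|V)
  = φ^{(i)}(a_1⋯a_n)`. -/
def InfCumFormula (k : ℕ) {A : Type*} [Ring A] [Algebra ℂ A]
    (φ : ℕ → (A →ₗ[ℂ] ℂ))
    (κ : ℕ → (n : ℕ) → MultilinearMap ℂ (fun _ : Fin n => A) ℂ) : Prop :=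
  ∀ i ≤ k, ∀ (n : ℕ), 1 ≤ n → ∀ a : Fin n → A,
    ∑ p ∈ ncFinset n,
      ∑ f ∈ (Fintype.piFinset fun _ : {V // V ∈ p} => Finset.range (i + 1)) |>.filter
          (fun f => ∑ V, f V = i),
        ((i.factorial : ℂ) / ∏ V, ((f V).factorial : ℂ)) *
          ∏ V : {V // V ∈ p}, κ (f V) V.1.card (restrictTuple a V.1)
    = φ i (List.ofFn a).prod

/-- `h(t) = o(t^k)` as `t → 0` along `K`: `h(t)/t^k → 0` as `t → 0`, `t ∈ K`. -/
def IsLittleOtk (k : ℕ) (K : Set ℝ) (h : ℝ → ℂ) : Prop :=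
  Filter.Tendsto (fun t : ℝ => h t / (t : ℂ) ^ k) (nhdsWithin 0 (K \ {0})) (nhds 0)

namespace Stmt17Aux

open Filter Finset

variable {k : ℕ} {K : Set ℝ}

lemma littleO_congr {g g' : ℝ → ℂ} (h : ∀ t ∈ K \ {0}, g t = g' t)
    (hg : IsLittleOtk k K g) : IsLittleOtk k K g' := by
  refine hg.congr' ?_
  filter_upwards [self_mem_nhdsWithin] with t ht
  rw [h t ht]

lemma littleO_zero : IsLittleOtk k K (fun _ => 0) := by
  simpa [IsLittleOtk, zero_div] using (tendsto_const_nhds : Filter.Tendsto (fun _ : ℝ => (0:ℂ)) _ (nhds 0))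

lemma littleO_sum {ι : Type*} (s : Finset ι) (g : ι → ℝ → ℂ)
    (h : ∀ p ∈ s, IsLittleOtk k K (g p)) :
    IsLittleOtk k K (fun t => ∑ p ∈ s, g p t) := by
  unfold IsLittleOtk
  have he : (fun t : ℝ => (∑ p ∈ s, g p t) / (t:ℂ)^k)
      = fun t => ∑ p ∈ s, g p t / (t:ℂ)^k := funext fun t => by rw [Finset.sum_div]
  rw [he]
  simpa using tendsto_finset_sum s h

lemma littleO_mul_tendsto {g h : ℝ → ℂ} {c : ℂ} (hg : IsLittleOtk k K g)
    (hh : Filter.Tendsto h (nhdsWithin 0 (K \ {0})) (nhds c)) :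
    IsLittleOtk k K (fun t => g t * h t) := by
  unfold IsLittleOtk
  have he : (fun t : ℝ => (g t * h t) / (t:ℂ)^k) = fun t => (g t / (t:ℂ)^k) * h t :=
    funext fun t => (div_mul_eq_mul_div _ _ _).symm
  rw [he]
  simpa using hg.mul hh

lemma tendsto_of_littleO {g : ℝ → ℂ} (hg : IsLittleOtk k K g) :
    Filter.Tendsto g (nhdsWithin 0 (K \ {0})) (nhds 0) := by
  have hpow : Filter.Tendsto (fun t : ℝ => ((t:ℂ))^k) (nhdsWithin 0 (K \ {0}))
      (nhds ((((0:ℝ):ℂ))^k)) := by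
    exact ((Complex.continuous_ofReal.pow k).tendsto 0).mono_left nhdsWithin_le_nhds
  have h2 := hg.mul hpow
  have h3 : Filter.Tendsto (fun t : ℝ => g t / (t:ℂ)^k * ((t:ℂ))^k)
      (nhdsWithin 0 (K \ {0})) (nhds 0) := by simpa using h2
  refine h3.congr' ?_ |>.mono_right ?_
  · filter_upwards [self_mem_nhdsWithin] with t ht
    have ht0 : (t:ℂ) ≠ 0 := by
      simpa [Complex.ofReal_eq_zero] using ht.2
    rw [div_mul_cancel₀ _ (pow_ne_zero _ ht0)]
  · exact le_refl _

lemma littleO_monomial {i : ℕ} (hi : k < i) (c : ℂ) :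
    IsLittleOtk k K (fun t => c * (t:ℂ)^i) := by
  unfold IsLittleOtk
  have h1 : Filter.Tendsto (fun t : ℝ => c * ((t:ℂ))^(i-k)) (nhdsWithin 0 (K \ {0}))
      (nhds (c * (((0:ℝ):ℂ))^(i-k))) :=
    ((continuous_const.mul (Complex.continuous_ofReal.pow (i-k))).tendsto 0).mono_left
      nhdsWithin_le_nhds
  have h2 : c * (((0:ℝ):ℂ))^(i-k) = 0 := by
    simp [zero_pow (by omega : i - k ≠ 0)]
  rw [h2] at h1
  refine h1.congr' ?_
  filter_upwards [self_mem_nhdsWithin] with t ht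
  have ht0 : (t:ℂ) ≠ 0 := by simpa [Complex.ofReal_eq_zero] using ht.2
  have : (t:ℂ)^i = (t:ℂ)^(i-k) * (t:ℂ)^k := by rw [← pow_add]; congr 1; omega
  rw [this, ← mul_assoc, mul_div_cancel_right₀ _ (pow_ne_zero _ ht0)]

/-- `g` expands as `∑ b i t^i + o(t^k)`. -/
def ExpandsTo (k : ℕ) (K : Set ℝ) (g : ℝ → ℂ) (b : ℕ → ℂ) : Prop :=
  IsLittleOtk k K (fun t => g t - ∑ i ∈ Finset.range (k+1), b i * (t:ℂ)^i)

lemma expands_congr {g g' : ℝ → ℂ} {b : ℕ → ℂ} (h : ∀ t ∈ K \ {0}, g t = g' t)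
    (hg : ExpandsTo k K g b) : ExpandsTo k K g' b :=
  littleO_congr (fun t ht => by rw [h t ht]) hg

lemma expands_coef_congr {g : ℝ → ℂ} {b b' : ℕ → ℂ} (h : ∀ i ≤ k, b i = b' i)
    (hg : ExpandsTo k K g b) : ExpandsTo k K g b' := by
  unfold ExpandsTo at hg ⊢
  have : ∀ t : ℝ, (∑ i ∈ Finset.range (k+1), b i * (t:ℂ)^i)
      = ∑ i ∈ Finset.range (k+1), b' i * (t:ℂ)^i := fun t =>
    Finset.sum_congr rfl fun i hi => by rw [h i (by simpa using Nat.lt_succ_iff.mp (Finset.mem_range.mp hi))]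
  refine littleO_congr (fun t _ => by rw [this t]) hg

lemma expands_sub {g h : ℝ → ℂ} {b c : ℕ → ℂ} (hg : ExpandsTo k K g b)
    (hh : ExpandsTo k K h c) :
    ExpandsTo k K (fun t => g t - h t) (fun i => b i - c i) := by
  unfold ExpandsTo IsLittleOtk at hg hh ⊢
  have he : ∀ t : ℝ, (g t - h t - ∑ i ∈ Finset.range (k+1), (b i - c i) * (t:ℂ)^i)
      = (g t - ∑ i ∈ Finset.range (k+1), b i * (t:ℂ)^i)
        - (h t - ∑ i ∈ Finset.range (k+1), c i * (t:ℂ)^i) := by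
    intro t
    rw [Finset.sum_congr rfl (fun i _ => sub_mul (b i) (c i) ((t:ℂ)^i)), Finset.sum_sub_distrib]
    ring
  have h2 : Filter.Tendsto (fun t : ℝ =>
      ((g t - ∑ i ∈ Finset.range (k+1), b i * (t:ℂ)^i)
        - (h t - ∑ i ∈ Finset.range (k+1), c i * (t:ℂ)^i)) / (t:ℂ)^k)
      (nhdsWithin 0 (K \ {0})) (nhds 0) := by
    have h3 := hg.sub hh
    rw [sub_zero] at h3
    exact h3.congr fun t => (sub_div _ _ _).symm
  refine h2.congr ?_
  intro t
  simp only []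
  rw [he t]

lemma expands_sum {ι : Type*} (s : Finset ι) (g : ι → ℝ → ℂ) (b : ι → ℕ → ℂ)
    (h : ∀ p ∈ s, ExpandsTo k K (g p) (b p)) :
    ExpandsTo k K (fun t => ∑ p ∈ s, g p t) (fun i => ∑ p ∈ s, b p i) := by
  unfold ExpandsTo
  have he : ∀ t : ℝ, ((∑ p ∈ s, g p t) - ∑ i ∈ Finset.range (k+1), (∑ p ∈ s, b p i) * (t:ℂ)^i)
      = ∑ p ∈ s, (g p t - ∑ i ∈ Finset.range (k+1), b p i * (t:ℂ)^i) := by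
    intro t
    rw [Finset.sum_sub_distrib]
    congr 1
    rw [Finset.sum_comm]
    exact Finset.sum_congr rfl fun i _ => by rw [Finset.sum_mul]
  refine littleO_congr (fun t _ => (he t).symm) (littleO_sum s _ fun p hp => h p hp)

lemma expands_tendsto {g : ℝ → ℂ} {b : ℕ → ℂ} (hg : ExpandsTo k K g b) :
    Filter.Tendsto g (nhdsWithin 0 (K \ {0})) (nhds (∑ i ∈ Finset.range (k+1), b i * ((0:ℝ):ℂ)^i)) := by
  have h1 := tendsto_of_littleO hg
  have h2 : Filter.Tendsto (fun t : ℝ => ∑ i ∈ Finset.range (k+1), b i * ((t:ℂ))^i)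
      (nhdsWithin 0 (K \ {0})) (nhds (∑ i ∈ Finset.range (k+1), b i * ((0:ℝ):ℂ)^i)) := by
    refine Filter.Tendsto.mono_left ?_ nhdsWithin_le_nhds
    exact Continuous.tendsto (continuous_finset_sum _ fun i _ =>
      continuous_const.mul (Complex.continuous_ofReal.pow i)) 0
  have h3 := h1.add h2
  simp only [zero_add] at h3
  refine h3.congr ?_
  intro t; ring


lemma expands_mul {g h : ℝ → ℂ} {b c : ℕ → ℂ} (hg : ExpandsTo k K g b)
    (hh : ExpandsTo k K h c) :
    ExpandsTo k K (fun t => g t * h t)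
      (fun i => ∑ j ∈ Finset.range (i+1), b j * c (i-j)) := by
  classical
  set P : ℝ → ℂ := fun t => ∑ i ∈ Finset.range (k+1), b i * (t:ℂ)^i with hP
  set Q : ℝ → ℂ := fun t => ∑ i ∈ Finset.range (k+1), c i * (t:ℂ)^i with hQ
  set R : ℝ → ℂ := fun t =>
    ∑ i ∈ Finset.range (k+1), (∑ j ∈ Finset.range (i+1), b j * c (i-j)) * (t:ℂ)^i with hR
  -- the square of indices and its split
  set D : Finset (ℕ × ℕ) := (Finset.range (k+1) ×ˢ Finset.range (k+1)) with hD
  have hPQ : ∀ t : ℝ, P t * Q t = ∑ x ∈ D, b x.1 * c x.2 * (t:ℂ)^(x.1 + x.2) := by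
    intro t
    rw [hP, hQ, Finset.sum_mul_sum]
    rw [hD, Finset.sum_product]
    refine Finset.sum_congr rfl fun i _ => Finset.sum_congr rfl fun j _ => ?_
    rw [pow_add]; ring
  have hfilter : ∀ t : ℝ,
      ∑ x ∈ D.filter (fun x => x.1 + x.2 ≤ k), b x.1 * c x.2 * (t:ℂ)^(x.1 + x.2) = R t := by
    intro t
    rw [hR]
    have h1 : (R t : ℂ) = ∑ x ∈ (Finset.range (k+1)).sigma (fun i => Finset.range (i+1)),
        b x.2 * c (x.1 - x.2) * (t:ℂ)^x.1 := by
      rw [hR]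
      simp only []
      refine Eq.trans (Finset.sum_congr rfl fun i _ => Finset.sum_mul _ _ _) ?_
      exact (Finset.sum_sigma _ _ (fun x : Σ _ : ℕ, ℕ => b x.2 * c (x.1 - x.2) * (t:ℂ)^x.1)).symm
    rw [← hR, h1]
    refine Finset.sum_nbij' (fun x => (⟨x.1 + x.2, x.1⟩ : (_ : ℕ) × ℕ))
      (fun y => (y.2, y.1 - y.2)) ?_ ?_ ?_ ?_ ?_
    · intro x hx
      simp only [Finset.mem_filter, hD, Finset.mem_product, Finset.mem_range] at hx
      simp only [Finset.mem_sigma, Finset.mem_range]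
      omega
    · intro y hy
      simp only [Finset.mem_sigma, Finset.mem_range] at hy
      simp only [Finset.mem_filter, hD, Finset.mem_product, Finset.mem_range]
      omega
    · intro x hx
      simp only [Finset.mem_filter, hD, Finset.mem_product, Finset.mem_range] at hx
      simp only []
      congr 1 <;> omega
    · intro y hy
      simp only [Finset.mem_sigma, Finset.mem_range] at hy
      simp only []
      have : y.2 + (y.1 - y.2) = y.1 := by omega
      exact Sigma.ext this (by simp)
    · intro x hx
      simp only [Finset.mem_filter, hD, Finset.mem_product, Finset.mem_range] at hx
      have hx2 : x.1 + x.2 - x.1 = x.2 := by omega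
      simp only [hx2]
  -- tail is o(t^k)
  have htail : IsLittleOtk k K (fun t =>
      ∑ x ∈ D.filter (fun x => ¬ x.1 + x.2 ≤ k), b x.1 * c x.2 * (t:ℂ)^(x.1 + x.2)) := by
    refine littleO_sum _ _ fun x hx => ?_
    simp only [Finset.mem_filter] at hx
    exact littleO_monomial (by omega) _
  have hPQR : IsLittleOtk k K (fun t => P t * Q t - R t) := by
    refine littleO_congr (fun t _ => ?_) htail
    rw [← hfilter t]
    have := (Finset.sum_filter_add_sum_filter_not D (fun x => x.1 + x.2 ≤ k)
      (fun x => b x.1 * c x.2 * (t:ℂ)^(x.1 + x.2)))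
    rw [hPQ t, ← this]
    ring
  have heg : IsLittleOtk k K (fun t => g t - P t) := hg
  have heh : IsLittleOtk k K (fun t => h t - Q t) := hh
  have hQten : Filter.Tendsto Q (nhdsWithin 0 (K \ {0}))
      (nhds (∑ i ∈ Finset.range (k+1), c i * ((0:ℝ):ℂ)^i)) := by
    refine Filter.Tendsto.mono_left ?_ nhdsWithin_le_nhds
    exact Continuous.tendsto (continuous_finset_sum _ fun i _ =>
      continuous_const.mul (Complex.continuous_ofReal.pow i)) 0
  have hPten : Filter.Tendsto P (nhdsWithin 0 (K \ {0}))
      (nhds (∑ i ∈ Finset.range (k+1), b i * ((0:ℝ):ℂ)^i)) := by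
    refine Filter.Tendsto.mono_left ?_ nhdsWithin_le_nhds
    exact Continuous.tendsto (continuous_finset_sum _ fun i _ =>
      continuous_const.mul (Complex.continuous_ofReal.pow i)) 0
  have t1 : IsLittleOtk k K (fun t => (h t - Q t) * P t) := littleO_mul_tendsto heh hPten
  have t2 : IsLittleOtk k K (fun t => (g t - P t) * Q t) := littleO_mul_tendsto heg hQten
  have t3 : IsLittleOtk k K (fun t => (g t - P t) * (h t - Q t)) :=
    littleO_mul_tendsto heg (tendsto_of_littleO heh)
  have hsum4 : IsLittleOtk k K (fun t =>
      (P t * Q t - R t) + (h t - Q t) * P t + (g t - P t) * Q t + (g t - P t) * (h t - Q t)) := by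
    unfold IsLittleOtk at hPQR t1 t2 t3 ⊢
    have := ((hPQR.add t1).add t2).add t3
    simp only [add_zero] at this
    refine this.congr fun t => ?_
    simp only [← add_div]
  refine littleO_congr (fun t _ => ?_) hsum4
  ring


lemma expands_one : ExpandsTo k K (fun _ => (1:ℂ)) (fun i => if i = 0 then 1 else 0) := by
  unfold ExpandsTo
  have he : ∀ t : ℝ, ((1:ℂ) - ∑ i ∈ Finset.range (k+1),
      (if i = 0 then (1:ℂ) else 0) * (t:ℂ)^i) = 0 := by
    intro t
    rw [Finset.sum_eq_single_of_mem 0 (Finset.mem_range.mpr (Nat.succ_pos k))]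
    · simp
    · intro i _ hi
      simp [hi]
  refine littleO_congr (fun t _ => (he t).symm) littleO_zero

/-- The coefficient index set for a product over `s`. -/
noncomputable def piSet {ι : Type*} [DecidableEq ι] [Fintype ι] (s : Finset ι) (i : ℕ) :
    Finset (ι → ℕ) :=
  (Fintype.piFinset fun _ : ι => Finset.range (i+1)).filter
    (fun f => (∑ v ∈ s, f v = i) ∧ ∀ v ∉ s, f v = 0)

lemma piSet_univ_eq {ι : Type*} [DecidableEq ι] [Fintype ι] (i : ℕ) :
    piSet (Finset.univ : Finset ι) i
      = (Fintype.piFinset fun _ : ι => Finset.range (i+1)).filter (fun f => ∑ v, f v = i) := by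
  ext f
  simp only [piSet, Finset.mem_filter, Fintype.mem_piFinset, Finset.mem_univ, not_true,
    false_implies, and_true, forall_const]
  tauto

lemma expands_prod {ι : Type*} [DecidableEq ι] [Fintype ι] (g : ι → ℝ → ℂ) (b : ι → ℕ → ℂ)
    (hb : ∀ v, ExpandsTo k K (g v) (b v)) (s : Finset ι) :
    ExpandsTo k K (fun t => ∏ v ∈ s, g v t)
      (fun i => ∑ f ∈ piSet s i, ∏ v ∈ s, b v (f v)) := by
  classical
  induction s using Finset.induction_on with
  | empty =>
    refine expands_coef_congr (fun i _ => ?_) (expands_congr (fun t _ => by simp) expands_one)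
    by_cases hi : i = 0
    · subst hi
      have : piSet (∅ : Finset ι) 0 = {fun _ => 0} := by
        ext f
        simp only [piSet, Finset.mem_filter, Fintype.mem_piFinset, Finset.mem_range,
          Finset.mem_singleton, Finset.notMem_empty, Finset.sum_empty]
        constructor
        · rintro ⟨-, -, h⟩
          funext v
          exact h v (by simp)
        · rintro rfl
          simp
      simp [this]
    · have : piSet (∅ : Finset ι) i = ∅ := by
        rw [Finset.eq_empty_iff_forall_notMem]
        intro f hf
        rw [piSet, Finset.mem_filter] at hf
        exact hi (by simpa using hf.2.1.symm)
      simp [this, hi]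
  | @insert x s hx IH =>
    have h1 := expands_mul (hb x) IH
    refine expands_coef_congr (fun i _ => ?_) (expands_congr (fun t _ => ?_) h1)
    swap
    · rw [Finset.prod_insert hx]
    have h2 : ∀ j, b x j * ∑ f ∈ piSet s (i - j), ∏ v ∈ s, b v (f v)
        = ∑ f ∈ piSet s (i - j), b x j * ∏ v ∈ s, b v (f v) := fun j => Finset.mul_sum _ _ _
    simp only [h2]
    rw [Finset.sum_sigma']
    refine Finset.sum_nbij' (fun y => Function.update y.2 x y.1)
      (fun F => ⟨F x, Function.update F x 0⟩) ?_ ?_ ?_ ?_ ?_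
    · rintro ⟨j, f⟩ hy
      simp only [Finset.mem_sigma, Finset.mem_range, piSet, Finset.mem_filter,
        Fintype.mem_piFinset] at hy
      obtain ⟨hj, hf, hsum, hout⟩ := hy
      simp only [piSet, Finset.mem_filter, Fintype.mem_piFinset, Finset.mem_range]
      refine ⟨fun v => ?_, ?_, fun v hv => ?_⟩
      · by_cases hvx : v = x
        · subst hvx; rw [Function.update_self]; omega
        · rw [Function.update_of_ne hvx]
          have := hf v; omega
      · rw [Finset.sum_insert hx, Function.update_self]
        have : ∑ v ∈ s, Function.update f x j v = ∑ v ∈ s, f v :=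
          Finset.sum_congr rfl fun v hv =>
            Function.update_of_ne (by rintro rfl; exact hx hv) _ _
        rw [this, hsum]
        omega
      · have hvx : v ≠ x := fun h => hv (h ▸ Finset.mem_insert_self x s)
        rw [Function.update_of_ne hvx]
        exact hout v fun hvs => hv (Finset.mem_insert_of_mem hvs)
    · intro F hF
      simp only [piSet, Finset.mem_filter, Fintype.mem_piFinset, Finset.mem_range] at hF
      obtain ⟨hF1, hF2, hF3⟩ := hF
      rw [Finset.sum_insert hx] at hF2
      simp only [Finset.mem_sigma, Finset.mem_range, piSet, Finset.mem_filter,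
        Fintype.mem_piFinset]
      have hFx : F x ≤ i := by omega
      refine ⟨by omega, fun v => ?_, ?_, fun v hv => ?_⟩
      · by_cases hvx : v = x
        · subst hvx; rw [Function.update_self]
          omega
        · rw [Function.update_of_ne hvx]
          by_cases hvs : v ∈ s
          · have hle : F v ≤ ∑ w ∈ s, F w := Finset.single_le_sum (fun w _ => Nat.zero_le _) hvs
            omega
          · have : F v = 0 := hF3 v (by simp [hvx, hvs])
            simp [this]
      · have : ∑ v ∈ s, Function.update F x 0 v = ∑ v ∈ s, F v :=
          Finset.sum_congr rfl fun v hv =>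
            Function.update_of_ne (by rintro rfl; exact hx hv) _ _
        rw [this]
        omega
      · by_cases hvx : v = x
        · subst hvx; rw [Function.update_self]
        · rw [Function.update_of_ne hvx]
          exact hF3 v (by simp [hvx, hv])
    · rintro ⟨j, f⟩ hy
      simp only [Finset.mem_sigma, Finset.mem_range, piSet, Finset.mem_filter,
        Fintype.mem_piFinset] at hy
      obtain ⟨hj, hf, hsum, hout⟩ := hy
      have hfx : f x = 0 := hout x hx
      dsimp only
      rw [Function.update_self, Function.update_idem]
      rw [show (0:ℕ) = f x from hfx.symm, Function.update_eq_self]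
    · intro F hF
      dsimp only
      rw [Function.update_idem, Function.update_eq_self]
    · rintro ⟨j, f⟩ hy
      simp only [Finset.mem_sigma, Finset.mem_range, piSet, Finset.mem_filter,
        Fintype.mem_piFinset] at hy
      obtain ⟨hj, hf, hsum, hout⟩ := hy
      dsimp only
      rw [Finset.prod_insert hx, Function.update_self]
      congr 1
      refine Finset.prod_congr rfl fun v hv => ?_
      rw [Function.update_of_ne (show v ≠ x by rintro rfl; exact hx hv)]

lemma multilinear_cast_apply {A : Type*} [Ring A] [Algebra ℂ A]
    (κ : (m : ℕ) → MultilinearMap ℂ (fun _ : Fin m => A) ℂ) {m n : ℕ} (h : m = n)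
    (a : Fin n → A) : κ m (fun i => a (Fin.cast h i)) = κ n a := by
  subst h; rfl

lemma restrictTuple_univ {A : Type*} {n : ℕ} (a : Fin n → A) :
    restrictTuple a (Finset.univ : Finset (Fin n))
      = fun i => a (Fin.cast (Finset.card_fin n) i) := by
  have hmono : StrictMono (fun i : Fin ((Finset.univ : Finset (Fin n)).card) =>
      Fin.cast (Finset.card_fin n) i) := by
    intro i j hij
    simp only [Fin.lt_def, Fin.coe_cast]
    exact hij
  have hu := Finset.orderEmbOfFin_unique (rfl : (Finset.univ : Finset (Fin n)).card = _)
    (fun x => Finset.mem_univ _) hmono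
  funext i
  unfold restrictTuple
  congr 1
  have h1 : ((Finset.univ.orderIsoOfFin rfl i : Fin n)) = Finset.univ.orderEmbOfFin rfl i :=
    Finset.coe_orderIsoOfFin_apply _ _ _
  rw [h1, ← hu]

lemma kappa_restrict_univ {A : Type*} [Ring A] [Algebra ℂ A]
    (κ : (m : ℕ) → MultilinearMap ℂ (fun _ : Fin m => A) ℂ) (n : ℕ) (a : Fin n → A) :
    κ ((Finset.univ : Finset (Fin n)).card) (restrictTuple a Finset.univ) = κ n a := by
  rw [restrictTuple_univ]
  exact multilinear_cast_apply κ (Finset.card_fin n) a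

lemma one_mem_ncFinset (n : ℕ) (hn : 1 ≤ n) :
    ({Finset.univ} : Finset (Finset (Fin n))) ∈ ncFinset n := by
  haveI : Nonempty (Fin n) := ⟨⟨0, by omega⟩⟩
  simp only [ncFinset, Finset.mem_filter, Finset.mem_univ, true_and]
  refine ⟨⟨fun B hB => ?_, fun x => ?_⟩, ?_⟩
  · rw [Finset.mem_singleton] at hB
    subst hB
    exact Finset.univ_nonempty
  · refine ⟨Finset.univ, ⟨Finset.mem_singleton_self _, Finset.mem_univ x⟩, ?_⟩
    rintro B ⟨hB, -⟩
    exact Finset.mem_singleton.mp hB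
  · intro a b c d _ _ _ _ _
    exact ⟨Finset.univ, Finset.mem_singleton_self _, Finset.mem_univ a, Finset.mem_univ b⟩

lemma block_card {n : ℕ} {p : Finset (Finset (Fin n))} (hp : p ∈ ncFinset n)
    (hne : p ≠ {Finset.univ}) {V : Finset (Fin n)} (hV : V ∈ p) :
    1 ≤ V.card ∧ V.card < n := by
  simp only [ncFinset, Finset.mem_filter] at hp
  obtain ⟨-, ⟨hnonempty, huniq⟩, -⟩ := hp
  have h1 : V.Nonempty := hnonempty V hV
  refine ⟨Finset.card_pos.mpr h1, ?_⟩
  have hle : V.card ≤ n := by simpa using Finset.card_le_univ V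
  rcases lt_or_eq_of_le hle with h | h
  · exact h
  · exfalso
    have hVuniv : V = Finset.univ := Finset.eq_univ_of_card V (by rw [h, Fintype.card_fin])
    apply hne
    ext B
    simp only [Finset.mem_singleton]
    constructor
    · intro hB
      obtain ⟨x, hx⟩ := hnonempty B hB
      obtain ⟨C, -, hCuniq⟩ := huniq x
      have hBeq := hCuniq B ⟨hB, hx⟩
      have hU := hCuniq Finset.univ ⟨hVuniv ▸ hV, Finset.mem_univ x⟩
      rw [hBeq, hU]
    · rintro rfl
      exact hVuniv ▸ hV

end Stmt17Aux

/-- **Statement 17.** Let `(μ_t)_{t ∈ K}` be states on `A` admitting an expansion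
`μ_t = Σ_{i=0}^k (t^i/i!) μ^{(i)} + o(t^k)` as `t → 0` along `K` (where `0` is an
accumulation point of `K`). Let `(κ_t)_n` be the free cumulants of `(A, μ_t)` and
`κ_n^{(i)}` the infinitesimal cumulants of `(A, (μ^{(i)})_{0 ≤ i ≤ k})`. Then
`(κ_t)_n(a_1,…,a_n) = Σ_{i=0}^k (t^i/i!) κ_n^{(i)}(a_1,…,a_n) + o(t^k)` along `K`. -/
theorem stmt17 (k : ℕ) (A : Type*) [Ring A] [Algebra ℂ A]
    (K : Set ℝ) (hK : (nhdsWithin (0 : ℝ) (K \ {0})).NeBot)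
    (μ : ℝ → (A →ₗ[ℂ] ℂ)) (hμ1 : ∀ t ∈ K, μ t 1 = 1)
    (μ' : ℕ → (A →ₗ[ℂ] ℂ))
    (hexp : ∀ a : A, IsLittleOtk k K fun t =>
      μ t a - ∑ i ∈ Finset.range (k + 1), (t : ℂ) ^ i / (i.factorial : ℂ) * μ' i a)
    (κt : ℝ → (n : ℕ) → MultilinearMap ℂ (fun _ : Fin n => A) ℂ)
    (hκt : ∀ t ∈ K, ∀ (n : ℕ), 1 ≤ n → ∀ a : Fin n → A,
      ∑ p ∈ ncFinset n, ∏ V ∈ p, κt t V.card (restrictTuple a V) =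
        μ t (List.ofFn a).prod)
    (κinf : ℕ → (n : ℕ) → MultilinearMap ℂ (fun _ : Fin n => A) ℂ)
    (hκinf : InfCumFormula k μ' κinf)
    (n : ℕ) (hn : 1 ≤ n) (a : Fin n → A) :
    IsLittleOtk k K fun t =>
      κt t n a - ∑ i ∈ Finset.range (k + 1),
        (t : ℂ) ^ i / (i.factorial : ℂ) * κinf i n a := by
  classical
  have hexp' : ∀ x : A, Stmt17Aux.ExpandsTo k K (fun t => μ t x)
      (fun i => μ' i x / (i.factorial : ℂ)) := by
    intro x
    refine Stmt17Aux.littleO_congr (fun t _ => ?_) (hexp x)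
    congr 1
    exact Finset.sum_congr rfl fun i _ => by ring
  have main : ∀ n, 1 ≤ n → ∀ a : Fin n → A,
      Stmt17Aux.ExpandsTo k K (fun t => κt t n a)
        (fun i => κinf i n a / (i.factorial : ℂ)) := by
    intro n
    induction n using Nat.strong_induction_on with
    | _ n IH =>
      intro hn a
      set one : Finset (Finset (Fin n)) := {Finset.univ} with hone_def
      have hone : one ∈ ncFinset n := Stmt17Aux.one_mem_ncFinset n hn
      -- κt recursion
      have hrec : ∀ t ∈ K, κt t n a = μ t (List.ofFn a).prod
          - ∑ p ∈ (ncFinset n).erase one, ∏ V ∈ p, κt t V.card (restrictTuple a V) := by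
        intro t ht
        have h0 := hκt t ht n hn a
        rw [← Finset.add_sum_erase _ _ hone] at h0
        have h1 : ∏ V ∈ one, κt t V.card (restrictTuple a V) = κt t n a := by
          rw [hone_def, Finset.prod_singleton]
          exact Stmt17Aux.kappa_restrict_univ (κt t) n a
        rw [h1] at h0
        exact eq_sub_of_add_eq h0
      -- expansions of block products
      have hprod : ∀ p ∈ (ncFinset n).erase one,
          Stmt17Aux.ExpandsTo k K (fun t => ∏ V ∈ p, κt t V.card (restrictTuple a V))
            (fun i => ∑ f ∈ Stmt17Aux.piSet (Finset.univ : Finset {V // V ∈ p}) i,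
              ∏ v ∈ Finset.univ,
                κinf (f v) v.1.card (restrictTuple a v.1) / (((f v).factorial : ℂ))) := by
        intro p hp
        rw [Finset.mem_erase] at hp
        have h2 := Stmt17Aux.expands_prod (k := k) (K := K) (ι := {V // V ∈ p})
          (fun v t => κt t v.1.card (restrictTuple a v.1))
          (fun v j => κinf j v.1.card (restrictTuple a v.1) / (j.factorial : ℂ))
          (fun v => by
            obtain ⟨h1, h2⟩ := Stmt17Aux.block_card hp.2 hp.1 v.2
            exact IH v.1.card h2 h1 (restrictTuple a v.1))
          Finset.univ
        refine Stmt17Aux.expands_congr (fun t _ => ?_) h2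
        exact Finset.prod_coe_sort p (fun V => κt t V.card (restrictTuple a V))
      have hsum := Stmt17Aux.expands_sum ((ncFinset n).erase one) _ _ hprod
      have hdiff := Stmt17Aux.expands_sub (hexp' (List.ofFn a).prod) hsum
      refine Stmt17Aux.expands_coef_congr (fun i hik => ?_)
        (Stmt17Aux.expands_congr (fun t ht => (hrec t ht.1).symm) hdiff)
      -- coefficient identity
      have hifac : ((i.factorial : ℂ)) ≠ 0 := Nat.cast_ne_zero.mpr i.factorial_ne_zero
      have h3 := hκinf i hik n hn a
      rw [← Finset.add_sum_erase _ _ hone] at h3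
      -- the full-partition term
      letI : Unique {V // V ∈ one} :=
        { default := ⟨Finset.univ, by rw [hone_def]; exact Finset.mem_singleton_self _⟩
          uniq := fun v => Subtype.ext (Finset.mem_singleton.mp v.2) }
      have h4 : (∑ f ∈ (Fintype.piFinset fun _ : {V // V ∈ one} => Finset.range (i + 1))
            |>.filter (fun f => ∑ V, f V = i),
          ((i.factorial : ℂ) / ∏ V, ((f V).factorial : ℂ)) *
            ∏ V : {V // V ∈ one}, κinf (f V) V.1.card (restrictTuple a V.1))
          = κinf i n a := by
        have hset : ((Fintype.piFinset fun _ : {V // V ∈ one} => Finset.range (i + 1))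
            |>.filter (fun f => ∑ V, f V = i)) = {fun _ => i} := by
          ext f
          simp only [Finset.mem_filter, Fintype.mem_piFinset, Finset.mem_range,
            Finset.mem_singleton]
          constructor
          · rintro ⟨-, hsum⟩
            rw [Fintype.sum_unique] at hsum
            funext v
            rw [Unique.eq_default v, hsum]
          · rintro rfl
            exact ⟨fun v => by show i < i + 1; omega, by rw [Fintype.sum_unique]⟩
        rw [hset, Finset.sum_singleton]
        rw [Fintype.prod_unique, Fintype.prod_unique]
        show ((i.factorial : ℂ) / (i.factorial : ℂ)) *
            κinf i ((Finset.univ : Finset (Fin n)).card) (restrictTuple a Finset.univ)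
          = κinf i n a
        rw [div_self hifac, one_mul]
        exact Stmt17Aux.kappa_restrict_univ (κinf i) n a
      rw [h4] at h3
      have h6 : κinf i n a = μ' i (List.ofFn a).prod
          - ∑ p ∈ (ncFinset n).erase one,
            ∑ f ∈ (Fintype.piFinset fun _ : {V // V ∈ p} => Finset.range (i + 1))
              |>.filter (fun f => ∑ V, f V = i),
            ((i.factorial : ℂ) / ∏ V, ((f V).factorial : ℂ)) *
              ∏ V : {V // V ∈ p}, κinf (f V) V.1.card (restrictTuple a V.1) :=
        eq_sub_of_add_eq h3
      -- now match coefficients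
      beta_reduce
      rw [h6, sub_div, Finset.sum_div]
      congr 1
      refine Finset.sum_congr rfl fun p hp => ?_
      -- per-partition coefficient
      rw [Stmt17Aux.piSet_univ_eq, Finset.sum_div]
      refine Finset.sum_congr rfl fun f hf => ?_
      rw [Finset.prod_div_distrib, eq_div_iff hifac]
      ring
  have hm := main n hn a
  refine Stmt17Aux.littleO_congr (fun t _ => ?_) hm
  congr 1
  exact Finset.sum_congr rfl fun i _ => by ring
end
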